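/- arXiv:1711.04280 — 2 statements merged into one kernel-verified Lean document; each statement's English description precedes it below -/
import Mathlib

section
/- Let X_1,...,X_N be i.i.d. nonnegative random variables whose common CDF F satisfies F(γ)/F(γ/L) = O(1) as γ → 0⁺ (i.e., limsup_{γ→0} F(γ)/F(γ/L) < ∞). Then limsup_{γ→0} F(γ)^N / P(∑_{k=1}^L X^{(k)} ≤ γ) < ∞. -/
open MeasureTheory ProbabilityTheory Filter Set Topology

noncomputable section

/-- The `k`-th largest value (0-indexed) among `x 0, ..., x (N-1)`. -/
def ordDesc {N : ℕ} (x : Fin N → ℝ) (k : Fin N) : ℝ := (x ∘ Tuple.sort x) k.rev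

/-- Sum of the `L` largest values among `x 0, ..., x (N-1)`. -/
def topSum {N : ℕ} (L : ℕ) (x : Fin N → ℝ) : ℝ :=
  ∑ k ∈ Finset.univ.filter (fun k : Fin N => (k : ℕ) < L), ordDesc x k

lemma topSum_le {N L : ℕ} (hL1 : 1 ≤ L) (hLN : L ≤ N) (x : Fin N → ℝ) (γ : ℝ)
    (h : ∀ i, x i ≤ γ / L) : topSum L x ≤ γ := by
  have hcard : (Finset.univ.filter (fun k : Fin N => (k : ℕ) < L)).card = L := by
    have : (Finset.univ.filter (fun k : Fin N => (k : ℕ) < L))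
        = (Finset.range L).attachFin (fun m hm => lt_of_lt_of_le (Finset.mem_range.mp hm) hLN) := by
      ext k; simp [Finset.mem_attachFin]
    rw [this, Finset.card_attachFin, Finset.card_range]
  calc topSum L x ≤ ∑ k ∈ Finset.univ.filter (fun k : Fin N => (k : ℕ) < L), (γ / L) := by
        apply Finset.sum_le_sum; intro k _; exact h _
    _ = L * (γ / L) := by rw [Finset.sum_const, hcard]; simp [mul_comm]
    _ = γ := by field_simp

theorem stmt2 {Ω : Type*} [MeasurableSpace Ω] (μ : Measure Ω) [IsProbabilityMeasure μ]
    (N L : ℕ) (hL1 : 1 ≤ L) (hLN : L ≤ N)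
    (X : Fin N → Ω → ℝ) (hmeas : ∀ i, Measurable (X i))
    (hnonneg : ∀ i ω, 0 ≤ X i ω)
    (hindep : iIndepFun X μ)
    (hident : ∀ i j, IdentDistrib (X i) (X j) μ μ)
    -- F(γ)/F(γ/L) = O(1) as γ → 0⁺, with F the common CDF
    (hO : Filter.limsup
        (fun γ : ℝ => μ {ω | X ⟨0, by omega⟩ ω ≤ γ} / μ {ω | X ⟨0, by omega⟩ ω ≤ γ / (L : ℝ)})
        (𝓝[>] (0:ℝ)) < ⊤) :
    Filter.limsup
        (fun γ : ℝ => (μ {ω | X ⟨0, by omega⟩ ω ≤ γ}) ^ N /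
          μ {ω | topSum L (fun i => X i ω) ≤ γ})
        (𝓝[>] (0:ℝ)) < ⊤ := by
  have hN : 0 < N := by omega
  set i0 : Fin N := ⟨0, by omega⟩
  set F : ℝ → ENNReal := fun c => μ {ω | X i0 ω ≤ c} with hF
  -- each marginal preimage has measure F c
  have hmarg : ∀ (i : Fin N) (c : ℝ), μ (X i ⁻¹' Iic c) = F c := by
    intro i c
    have := (hident i i0).measure_mem_eq (s := Iic c) measurableSet_Iic
    simpa [hF, Set.preimage, Set.mem_Iic] using this
  -- lower bound on the probability of the top-sum event
  have hlow : ∀ γ : ℝ, F (γ / L) ^ N ≤ μ {ω | topSum L (fun i => X i ω) ≤ γ} := by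
    intro γ
    have hsub : (⋂ i, X i ⁻¹' Iic (γ / L)) ⊆ {ω | topSum L (fun i => X i ω) ≤ γ} := by
      intro ω hω
      simp only [Set.mem_iInter, Set.mem_preimage, Set.mem_Iic] at hω
      exact topSum_le hL1 hLN _ γ hω
    have hint : μ (⋂ i, X i ⁻¹' Iic (γ / L)) = ∏ i : Fin N, μ (X i ⁻¹' Iic (γ / L)) :=
      hindep.meas_iInter (fun i => ⟨Iic (γ / L), measurableSet_Iic, rfl⟩)
    calc F (γ / L) ^ N = ∏ i : Fin N, μ (X i ⁻¹' Iic (γ / L)) := by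
          simp [hmarg, Finset.prod_const]
      _ = μ (⋂ i, X i ⁻¹' Iic (γ / L)) := hint.symm
      _ ≤ _ := measure_mono hsub
  obtain ⟨C, hC, hCtop⟩ := exists_between hO
  have hCne : C ≠ ⊤ := hCtop.ne
  have hev : ∀ᶠ γ in 𝓝[>] (0:ℝ), F γ / F (γ / L) < C := eventually_lt_of_limsup_lt hC
  have hev2 : ∀ᶠ γ in 𝓝[>] (0:ℝ),
      F γ ^ N / μ {ω | topSum L (fun i => X i ω) ≤ γ} ≤ C ^ N := by
    filter_upwards [hev] with γ h
    by_cases h0 : F (γ / L) = 0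
    · have hFγ : F γ = 0 := by
        by_contra hne
        have : F γ / F (γ / L) = ⊤ := by
          rw [h0, ENNReal.div_zero hne]
        rw [this] at h
        exact absurd (h.trans hCtop) (lt_irrefl _)
      simp [hFγ, zero_pow hN.ne']
    · have hFle : F γ ≤ C * F (γ / L) :=
        (ENNReal.div_le_iff_le_mul (Or.inl h0) (Or.inl (measure_ne_top μ _))).mp h.le
      have hpow : F γ ^ N ≤ C ^ N * μ {ω | topSum L (fun i => X i ω) ≤ γ} := by
        calc F γ ^ N ≤ (C * F (γ / L)) ^ N := pow_le_pow_left' hFle N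
          _ = C ^ N * F (γ / L) ^ N := mul_pow _ _ _
          _ ≤ C ^ N * μ {ω | topSum L (fun i => X i ω) ≤ γ} :=
            mul_le_mul_right (hlow γ) _
      exact (ENNReal.div_le_iff_le_mul (Or.inr (by simp [hCne]))
        (Or.inl (measure_ne_top μ _))).mpr hpow
  have : Filter.limsup
      (fun γ : ℝ => F γ ^ N / μ {ω | topSum L (fun i => X i ω) ≤ γ}) (𝓝[>] (0:ℝ)) ≤ C ^ N :=
    limsup_le_of_le (by isBoundedDefault) hev2
  exact lt_of_le_of_lt this (ENNReal.pow_lt_top hCtop)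
end
end

section
/- Weibull case bounded relative error (Proposition 3): let Y_1,...,Y_N be i.i.d. exponential with mean 1, 0 < α < 1, η > 0, λ_1,...,λ_L > 0 with ∑λ_k = 1, ℓ(γ) = P(∑_{k=1}^L (Y^{(k)})^{1/α} ≤ γ/η), ℓ_1(γ) = P(∑_{k=1}^L λ_k^{1−α} Y^{(k)} ≤ (γ/η)^α). Then limsup_{γ→0⁺} ℓ_1(γ)/ℓ(γ) ≤ L^{αN}/λ_1^{N(1−α)} < ∞. -/
open MeasureTheory ProbabilityTheory Filter Set Topology

noncomputable section

lemma expMeasure_Iic' (x : ℝ) :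
    expMeasure 1 (Iic x) = ENNReal.ofReal (if 0 ≤ x then 1 - Real.exp (-x) else 0) := by
  rw [expMeasure, gammaMeasure, withDensity_apply _ measurableSet_Iic]
  have : ∫⁻ y in Iic x, gammaPDF 1 1 y = ∫⁻ y in Iic x, exponentialPDF 1 y := rfl
  rw [this, lintegral_exponentialPDF_eq_antiDeriv one_pos]
  simp

lemma expMeasure_Iio_zero : expMeasure 1 (Iio 0) = 0 := by
  rw [expMeasure, gammaMeasure, withDensity_apply _ measurableSet_Iio]
  have : ∫⁻ y in Iio (0:ℝ), gammaPDF 1 1 y = ∫⁻ y in Iio (0:ℝ), exponentialPDF 1 y := rfl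
  rw [this, lintegral_exponentialPDF_of_nonpos le_rfl]

-- ordDesc values are attained and bounded by the value at index 0
lemma ordDesc_mem {N : ℕ} (x : Fin N → ℝ) (k : Fin N) : ∃ i, ordDesc x k = x i :=
  ⟨Tuple.sort x k.rev, rfl⟩

lemma le_ordDesc_zero {N : ℕ} (x : Fin N → ℝ) (h0 : 0 < N) (i : Fin N) :
    x i ≤ ordDesc x ⟨0, h0⟩ := by
  have hmono := Tuple.monotone_sort x
  have hi : x i = (x ∘ Tuple.sort x) ((Tuple.sort x).symm i) := by simp
  rw [hi]
  apply hmono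
  have : ((Tuple.sort x).symm i).rev.rev ≤ (⟨0, h0⟩ : Fin N).rev := by
    rw [Fin.rev_le_rev, Fin.le_def]
    exact Nat.zero_le _
  simpa [Fin.rev_rev] using this

lemma slope_limit {c : ℝ} (hc : 0 < c) :
    Tendsto (fun t : ℝ => (1 - Real.exp (-(c*t))) / t) (𝓝[>] (0:ℝ)) (𝓝 c) := by
  have hd : HasDerivAt (fun t : ℝ => 1 - Real.exp (-(c*t))) c 0 := by
    have h1 : HasDerivAt (fun t : ℝ => -(c*t)) (-c) 0 := by
      simpa using ((hasDerivAt_id (0:ℝ)).const_mul (-c))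
    have h2 := h1.exp
    have h3 := h2.const_sub 1
    simpa using h3
  have := hasDerivAt_iff_tendsto_slope.mp hd
  have h4 : Tendsto (slope (fun t : ℝ => 1 - Real.exp (-(c*t))) 0) (𝓝[>] (0:ℝ)) (𝓝 c) :=
    this.mono_left (nhdsWithin_mono _ (fun x hx => ne_of_gt hx))
  refine h4.congr (fun t => ?_)
  simp [slope_def_field, div_eq_mul_inv, mul_comm]

lemma ratio_limit {c₁ c₂ : ℝ} (hc₁ : 0 < c₁) (hc₂ : 0 < c₂) :
    Tendsto (fun t : ℝ => (1 - Real.exp (-(c₁*t))) / (1 - Real.exp (-(c₂*t))))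
      (𝓝[>] (0:ℝ)) (𝓝 (c₁/c₂)) := by
  have h2 : Tendsto (fun t : ℝ => ((1 - Real.exp (-(c₂*t))) / t)⁻¹) (𝓝[>] (0:ℝ)) (𝓝 c₂⁻¹) :=
    (slope_limit hc₂).inv₀ hc₂.ne'
  have h := (slope_limit hc₁).mul h2
  rw [show c₁ * c₂⁻¹ = c₁ / c₂ from rfl] at h
  refine Tendsto.congr' ?_ h
  filter_upwards [self_mem_nhdsWithin] with t (ht : 0 < t)
  field_simp

lemma T_tendsto {α η : ℝ} (hα : 0 < α) (hη : 0 < η) :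
    Tendsto (fun γ : ℝ => (γ/η) ^ α) (𝓝[>] (0:ℝ)) (𝓝[>] (0:ℝ)) := by
  rw [tendsto_nhdsWithin_iff]
  constructor
  · have hcont : ContinuousAt (fun x : ℝ => x ^ α) 0 :=
      Real.continuousAt_rpow_const 0 α (Or.inr hα.le)
    have hdiv : Tendsto (fun γ : ℝ => γ / η) (𝓝[>] (0:ℝ)) (𝓝 0) := by
      have := (tendsto_id.div_const η : Tendsto (fun γ : ℝ => γ / η) (𝓝 (0:ℝ)) (𝓝 (0/η)))
      simpa using this.mono_left nhdsWithin_le_nhds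
    have := hcont.tendsto.comp hdiv
    simpa [Function.comp_def, Real.zero_rpow hα.ne'] using this
  · filter_upwards [self_mem_nhdsWithin] with γ (hγ : 0 < γ)
    exact Real.rpow_pos_of_pos (div_pos hγ hη) α

/-- Bounded relative error of the IS estimator in the Weibull case (Proposition 3). -/
theorem stmt9 {Ω : Type*} [MeasurableSpace Ω] (μ : Measure Ω) [IsProbabilityMeasure μ]
    (N L : ℕ) (hL1 : 1 ≤ L) (hLN : L ≤ N)
    (α η : ℝ) (hα0 : 0 < α) (hα1 : α < 1) (hη : 0 < η)
    (lam : Fin L → ℝ) (hpos : ∀ k, 0 < lam k) (hsum : ∑ k, lam k = 1)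
    (Y : Fin N → Ω → ℝ) (hYm : ∀ i, Measurable (Y i))
    (hYindep : iIndepFun Y μ)
    (hYlaw : ∀ i, μ.map (Y i) = expMeasure 1) :
    Filter.limsup (fun γ : ℝ =>
        -- ℓ₁(γ) = P(∑_{k=1}^L λ_k^{1-α} Y^{(k)} ≤ (γ/η)^α)
        μ {ω | ∑ k : Fin L,
            lam k ^ (1 - α) * ordDesc (fun i => Y i ω) (Fin.castLE hLN k) ≤ (γ / η) ^ α} /
        -- ℓ(γ) = P(∑_{k=1}^L (Y^{(k)})^{1/α} ≤ γ/η)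
        μ {ω | ∑ k : Fin L,
            (ordDesc (fun i => Y i ω) (Fin.castLE hLN k)) ^ (1 / α) ≤ γ / η})
      (𝓝[>] (0:ℝ))
      ≤ ENNReal.ofReal ((L : ℝ) ^ (α * N) / lam ⟨0, hL1⟩ ^ ((N : ℝ) * (1 - α))) := by
  have h0N : 0 < N := lt_of_lt_of_le hL1 hLN
  have hL0 : (0:ℝ) < L := by exact_mod_cast hL1
  set lam0 : ℝ := lam ⟨0, hL1⟩ with hlam0
  have hlam0pos : 0 < lam0 := hpos _
  set c₁ : ℝ := lam0 ^ (α - 1) with hc₁def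
  set c₂ : ℝ := ((L:ℝ) ^ α)⁻¹ with hc₂def
  have hc₁ : 0 < c₁ := Real.rpow_pos_of_pos hlam0pos _
  have hc₂ : 0 < c₂ := inv_pos.mpr (Real.rpow_pos_of_pos hL0 _)
  -- product formula
  have hprod : ∀ a : ℝ, μ (⋂ i, Y i ⁻¹' Iic a) = (expMeasure 1 (Iic a)) ^ N := by
    intro a
    rw [hYindep.meas_iInter (fun i => ⟨Iic a, measurableSet_Iic, rfl⟩)]
    have hone : ∀ i : Fin N, μ (Y i ⁻¹' Iic a) = expMeasure 1 (Iic a) := fun i => by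
      rw [← hYlaw i, Measure.map_apply (hYm i) measurableSet_Iic]
    simp [hone, Finset.prod_const]
  -- a.e. nonnegativity
  have hae : ∀ᵐ ω ∂μ, ∀ i, 0 ≤ Y i ω := by
    rw [ae_all_iff]
    intro i
    rw [ae_iff]
    have hset : {ω | ¬ 0 ≤ Y i ω} = Y i ⁻¹' Iio 0 := by ext ω; simp [not_le]
    rw [hset, ← Measure.map_apply (hYm i) measurableSet_Iio, hYlaw i, expMeasure_Iio_zero]
  -- the dominating real function
  set g : ℝ → ℝ := fun u => ((1 - Real.exp (-(c₁*u))) / (1 - Real.exp (-(c₂*u)))) ^ N with hgdef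
  -- pointwise bound
  have key : ∀ᶠ γ in 𝓝[>] (0:ℝ),
      (μ {ω | ∑ k : Fin L,
            lam k ^ (1 - α) * ordDesc (fun i => Y i ω) (Fin.castLE hLN k) ≤ (γ / η) ^ α} /
        μ {ω | ∑ k : Fin L,
            (ordDesc (fun i => Y i ω) (Fin.castLE hLN k)) ^ (1 / α) ≤ γ / η})
        ≤ ENNReal.ofReal (g ((γ/η) ^ α)) := by
    filter_upwards [self_mem_nhdsWithin] with γ (hγ : 0 < γ)
    set s : ℝ := γ / η with hsdef
    have hs : 0 < s := div_pos hγ hη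
    set t : ℝ := s ^ α with htdef
    have ht : 0 < t := Real.rpow_pos_of_pos hs _
    -- numerator bound
    have hnum : μ {ω | ∑ k : Fin L,
            lam k ^ (1 - α) * ordDesc (fun i => Y i ω) (Fin.castLE hLN k) ≤ t}
          ≤ (expMeasure 1 (Iic (c₁ * t))) ^ N := by
      rw [← hprod]
      apply measure_mono_ae
      filter_upwards [hae] with ω hω hmem
      have hmem2 : ∑ k : Fin L,
          lam k ^ (1 - α) * ordDesc (fun i => Y i ω) (Fin.castLE hLN k) ≤ t := hmem
      show ω ∈ ⋂ i, Y i ⁻¹' Iic (c₁ * t)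
      simp only [mem_iInter, mem_preimage, mem_Iic]
      intro i
      have hord0 : ordDesc (fun i => Y i ω) ⟨0, h0N⟩ ≤ c₁ * t := by
        have hterm : lam0 ^ (1 - α) * ordDesc (fun i => Y i ω) (Fin.castLE hLN ⟨0, hL1⟩) ≤ t := by
          refine le_trans (Finset.single_le_sum (f := fun k : Fin L =>
            lam k ^ (1 - α) * ordDesc (fun i => Y i ω) (Fin.castLE hLN k)) ?_
            (Finset.mem_univ (⟨0, hL1⟩ : Fin L))) hmem2
          intro k _
          obtain ⟨j, hj⟩ := ordDesc_mem (fun i => Y i ω) (Fin.castLE hLN k)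
          exact mul_nonneg (Real.rpow_pos_of_pos (hpos k) _).le (hj ▸ hω j)
        have hcast : Fin.castLE hLN (⟨0, hL1⟩ : Fin L) = (⟨0, h0N⟩ : Fin N) := rfl
        rw [hcast] at hterm
        have h1 : ordDesc (fun i => Y i ω) ⟨0, h0N⟩ ≤ t / lam0 ^ (1 - α) :=
          (le_div_iff₀' (Real.rpow_pos_of_pos hlam0pos _)).mpr hterm
        have h2 : c₁ * t = t / lam0 ^ (1 - α) := by
          rw [hc₁def, show α - 1 = -(1 - α) by ring, Real.rpow_neg hlam0pos.le]
          rw [div_eq_mul_inv, mul_comm]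
        rw [h2]; exact h1
      have hle := le_ordDesc_zero (fun j => Y j ω) h0N i
      exact le_trans hle hord0
    -- denominator bound
    have hden : (expMeasure 1 (Iic (c₂ * t))) ^ N
          ≤ μ {ω | ∑ k : Fin L,
            (ordDesc (fun i => Y i ω) (Fin.castLE hLN k)) ^ (1 / α) ≤ s} := by
      have hc₂t : c₂ * t = (s / L) ^ α := by
        rw [Real.div_rpow hs.le hL0.le, hc₂def, div_eq_mul_inv, mul_comm]
      rw [← hprod, hc₂t]
      apply measure_mono_ae
      filter_upwards [hae] with ω hω hmem
      have hmem2 : ∀ i, Y i ω ≤ (s / (L:ℝ)) ^ α := by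
        have h : ω ∈ ⋂ i, Y i ⁻¹' Iic ((s / (L:ℝ)) ^ α) := hmem
        simpa only [mem_iInter, mem_preimage, mem_Iic] using h
      show ∑ k : Fin L, (ordDesc (fun i => Y i ω) (Fin.castLE hLN k)) ^ (1 / α) ≤ s
      have hbound : ∀ k : Fin L,
          (ordDesc (fun i => Y i ω) (Fin.castLE hLN k)) ^ (1 / α) ≤ s / L := by
        intro k
        obtain ⟨j, hj⟩ := ordDesc_mem (fun i => Y i ω) (Fin.castLE hLN k)
        have h1 : ordDesc (fun i => Y i ω) (Fin.castLE hLN k) ≤ (s / L) ^ α := hj ▸ hmem2 j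
        have h2 : (0:ℝ) ≤ ordDesc (fun i => Y i ω) (Fin.castLE hLN k) := hj ▸ hω j
        calc (ordDesc (fun i => Y i ω) (Fin.castLE hLN k)) ^ (1 / α)
            ≤ ((s / L) ^ α) ^ (1 / α) :=
              Real.rpow_le_rpow h2 h1 (by positivity)
          _ = s / L := by
              rw [← Real.rpow_mul (by positivity), mul_one_div_cancel hα0.ne',
                Real.rpow_one]
      calc ∑ k : Fin L, (ordDesc (fun i => Y i ω) (Fin.castLE hLN k)) ^ (1 / α)
          ≤ ∑ _k : Fin L, s / L := Finset.sum_le_sum (fun k _ => hbound k)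
        _ = s := by
            rw [Finset.sum_const, Finset.card_univ, Fintype.card_fin, nsmul_eq_mul,
              mul_div_cancel₀ _ (ne_of_gt hL0)]
    -- exponential CDF values
    have hF : ∀ c : ℝ, 0 < c → expMeasure 1 (Iic (c * t)) =
        ENNReal.ofReal (1 - Real.exp (-(c * t))) := by
      intro c hc
      rw [expMeasure_Iic' (c * t), if_pos (by positivity)]
    have hBpos : 0 < 1 - Real.exp (-(c₂ * t)) := by
      have : Real.exp (-(c₂ * t)) < 1 := by
        rw [Real.exp_lt_one_iff]; nlinarith
      linarith
    have hApos : (0:ℝ) ≤ 1 - Real.exp (-(c₁ * t)) := by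
      have : Real.exp (-(c₁ * t)) ≤ 1 := by
        rw [Real.exp_le_one_iff]; nlinarith
      linarith
    calc _ ≤ (expMeasure 1 (Iic (c₁ * t))) ^ N / (expMeasure 1 (Iic (c₂ * t))) ^ N :=
          ENNReal.div_le_div hnum hden
      _ = ENNReal.ofReal (g t) := by
          rw [hF c₁ hc₁, hF c₂ hc₂, ← ENNReal.ofReal_pow hApos, ← ENNReal.ofReal_pow hBpos.le,
            ← ENNReal.ofReal_div_of_pos (pow_pos hBpos N), hgdef]
          simp [div_pow]
  -- the limit of the dominating function
  have hlim : Tendsto (fun γ : ℝ => ENNReal.ofReal (g ((γ/η) ^ α))) (𝓝[>] (0:ℝ))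
      (𝓝 (ENNReal.ofReal ((c₁/c₂) ^ N))) := by
    have h1 : Tendsto g (𝓝[>] (0:ℝ)) (𝓝 ((c₁/c₂) ^ N)) := (ratio_limit hc₁ hc₂).pow N
    exact (ENNReal.continuous_ofReal.tendsto _).comp (h1.comp (T_tendsto hα0 hη))
  calc Filter.limsup _ (𝓝[>] (0:ℝ))
      ≤ Filter.limsup (fun γ : ℝ => ENNReal.ofReal (g ((γ/η) ^ α))) (𝓝[>] (0:ℝ)) :=
        Filter.limsup_le_limsup key
    _ = ENNReal.ofReal ((c₁/c₂) ^ N) := hlim.limsup_eq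
    _ ≤ _ := by
        apply le_of_eq
        congr 1
        have hc : c₁ / c₂ = lam0 ^ (α - 1) * (L:ℝ) ^ α := by
          rw [hc₁def, hc₂def, div_eq_mul_inv, inv_inv]
        rw [hc, mul_pow, ← Real.rpow_natCast (lam0 ^ (α-1)) N, ← Real.rpow_natCast ((L:ℝ) ^ α) N,
          ← Real.rpow_mul hlam0pos.le, ← Real.rpow_mul hL0.le]
        rw [show (α - 1) * (N:ℝ) = -((N:ℝ) * (1 - α)) by ring, Real.rpow_neg hlam0pos.le]
        rw [div_eq_mul_inv, mul_comm]
end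
end
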